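/- Suppose (x_n)_{n≥-1}, (y_n)_{n≥-1} solve the system with x_n ≠ 0 and y_n ≠ 0 for all n. Then for every n ≥ 0, y_{2n-1} = y_{-1}^{1-n}·(x_{-1}·y_0/x_0)^n·∏_{s=0}^{n-1} [(∏_{k=0}^{2s-1} a_k + x_0·y_{-1}·∑_{l=0}^{2s-1} b_l·∏_{k=l+1}^{2s-1} a_k) / (∏_{k=0}^{2s} c_k + x_{-1}·y_0·∑_{l=0}^{2s} d_l·∏_{k=l+1}^{2s} c_k)], where y_{-1}^{1-n} denotes an integer power of the nonzero real y_{-1}. -/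

import Mathlib

theorem stmt_7 (x y : ℤ → ℝ) (a b c d : ℕ → ℝ)
    (hx : ∀ n : ℤ, -1 ≤ n → x n ≠ 0) (hy : ∀ n : ℤ, -1 ≤ n → y n ≠ 0)
    (hda : ∀ n : ℕ, a n + b n * (x n * y ((n : ℤ) - 1)) ≠ 0)
    (hdc : ∀ n : ℕ, c n + d n * (x ((n : ℤ) - 1) * y n) ≠ 0)
    (hxe : ∀ n : ℕ, x ((n : ℤ) + 1) =
      x n * y ((n : ℤ) - 1) / (y n * (a n + b n * (x n * y ((n : ℤ) - 1)))))
    (hye : ∀ n : ℕ, y ((n : ℤ) + 1) =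
      x ((n : ℤ) - 1) * y n / (x n * (c n + d n * (x ((n : ℤ) - 1) * y n)))) :
    ∀ n : ℕ, y (2 * (n : ℤ) - 1) =
      y (-1) ^ (1 - (n : ℤ)) * (x (-1) * y 0 / x 0) ^ n *
        ∏ s ∈ Finset.range n,
          ((∏ k ∈ Finset.range (2 * s), a k) +
              x 0 * y (-1) * ∑ l ∈ Finset.range (2 * s), b l * ∏ k ∈ Finset.Ico (l + 1) (2 * s), a k) /
          ((∏ k ∈ Finset.range (2 * s + 1), c k) +
              x (-1) * y 0 * ∑ l ∈ Finset.range (2 * s + 1), d l * ∏ k ∈ Finset.Ico (l + 1) (2 * s + 1), c k) := by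
  have hx' : ∀ n : ℕ, x n ≠ 0 := fun n => hx n (by omega)
  have hy' : ∀ n : ℕ, y n ≠ 0 := fun n => hy n (by omega)
  have hy1 : ∀ n : ℕ, y ((n : ℤ) - 1) ≠ 0 := fun n => hy _ (by omega)
  have hx1 : ∀ n : ℕ, x ((n : ℤ) - 1) ≠ 0 := fun n => hx _ (by omega)
  obtain ⟨u, hu_def⟩ : ∃ u : ℕ → ℝ, u = fun n : ℕ => x n * y ((n : ℤ) - 1) := ⟨_, rfl⟩
  obtain ⟨v, hv_def⟩ : ∃ v : ℕ → ℝ, v = fun n : ℕ => x ((n : ℤ) - 1) * y n := ⟨_, rfl⟩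
  have hue : ∀ n : ℕ, u n = x n * y ((n : ℤ) - 1) := fun n => by rw [hu_def]
  have hve : ∀ n : ℕ, v n = x ((n : ℤ) - 1) * y n := fun n => by rw [hv_def]
  have hune : ∀ n, u n ≠ 0 := fun n => by rw [hue]; exact mul_ne_zero (hx' n) (hy1 n)
  have hvne : ∀ n, v n ≠ 0 := fun n => by rw [hve]; exact mul_ne_zero (hx1 n) (hy' n)
  have hda' : ∀ n, a n + b n * u n ≠ 0 := fun n => by rw [hue]; exact hda n
  have hdc' : ∀ n, c n + d n * v n ≠ 0 := fun n => by rw [hve]; exact hdc n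
  have hu0 : u 0 = x 0 * y (-1) := by rw [hue]; norm_num
  have hv0 : v 0 = x (-1) * y 0 := by rw [hve]; norm_num
  have hu : ∀ n : ℕ, u (n + 1) = u n / (a n + b n * u n) := by
    intro n
    rw [hue, hue n]
    have e : ((n+1 : ℕ) : ℤ) - 1 = (n : ℤ) := by push_cast; ring
    have e2 : ((n+1 : ℕ) : ℤ) = (n : ℤ) + 1 := by push_cast; ring
    rw [e, e2, hxe n]
    field_simp [hy' n, hda n]
  have hv : ∀ n : ℕ, v (n + 1) = v n / (c n + d n * v n) := by
    intro n
    rw [hve, hve n]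
    have e : ((n+1 : ℕ) : ℤ) - 1 = (n : ℤ) := by push_cast; ring
    have e2 : ((n+1 : ℕ) : ℤ) = (n : ℤ) + 1 := by push_cast; ring
    rw [e, e2, hye n]
    field_simp [hx' n, hdc n]
  obtain ⟨A, hA_def⟩ : ∃ A : ℕ → ℝ, A = fun m => (∏ k ∈ Finset.range m, a k)
      + u 0 * ∑ l ∈ Finset.range m, b l * ∏ k ∈ Finset.Ico (l + 1) m, a k := ⟨_, rfl⟩
  obtain ⟨C, hC_def⟩ : ∃ C : ℕ → ℝ, C = fun m => (∏ k ∈ Finset.range m, c k)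
      + v 0 * ∑ l ∈ Finset.range m, d l * ∏ k ∈ Finset.Ico (l + 1) m, c k := ⟨_, rfl⟩
  have hAe : ∀ m, A m = (∏ k ∈ Finset.range m, a k)
      + u 0 * ∑ l ∈ Finset.range m, b l * ∏ k ∈ Finset.Ico (l + 1) m, a k := fun m => by rw [hA_def]
  have hCe : ∀ m, C m = (∏ k ∈ Finset.range m, c k)
      + v 0 * ∑ l ∈ Finset.range m, d l * ∏ k ∈ Finset.Ico (l + 1) m, c k := fun m => by rw [hC_def]
  have hA : ∀ m, A (m + 1) = a m * A m + b m * u 0 := by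
    intro m
    rw [hAe, hAe m]
    simp only [Finset.prod_range_succ, Finset.sum_range_succ]
    have hs : ∀ l ∈ Finset.range m, b l * ∏ k ∈ Finset.Ico (l + 1) (m + 1), a k
        = (b l * ∏ k ∈ Finset.Ico (l + 1) m, a k) * a m := by
      intro l hl
      simp only [Finset.mem_range] at hl
      rw [Finset.prod_Ico_succ_top (by omega)]
      ring
    rw [Finset.sum_congr rfl hs, ← Finset.sum_mul, Finset.Ico_self, Finset.prod_empty]
    ring
  have hC : ∀ m, C (m + 1) = c m * C m + d m * v 0 := by
    intro m
    rw [hCe, hCe m]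
    simp only [Finset.prod_range_succ, Finset.sum_range_succ]
    have hs : ∀ l ∈ Finset.range m, d l * ∏ k ∈ Finset.Ico (l + 1) (m + 1), c k
        = (d l * ∏ k ∈ Finset.Ico (l + 1) m, c k) * c m := by
      intro l hl
      simp only [Finset.mem_range] at hl
      rw [Finset.prod_Ico_succ_top (by omega)]
      ring
    rw [Finset.sum_congr rfl hs, ← Finset.sum_mul, Finset.Ico_self, Finset.prod_empty]
    ring
  have huA : ∀ m, u m * A m = u 0 := by
    intro m
    induction m with
    | zero => rw [hAe]; simp
    | succ m ih =>
      rw [hA m, hu m, div_mul_eq_mul_div, div_eq_iff (hda' m), ← ih]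
      ring
  have hvC : ∀ m, v m * C m = v 0 := by
    intro m
    induction m with
    | zero => rw [hCe]; simp
    | succ m ih =>
      rw [hC m, hv m, div_mul_eq_mul_div, div_eq_iff (hdc' m), ← ih]
      ring
  have hAne : ∀ m, A m ≠ 0 := by
    intro m h
    have h2 := huA m
    rw [h, mul_zero] at h2
    exact hune 0 h2.symm
  have hCne : ∀ m, C m ≠ 0 := by
    intro m h
    have h2 := hvC m
    rw [h, mul_zero] at h2
    exact hvne 0 h2.symm
  have hkey : ∀ n : ℕ, y ((n : ℤ) + 1) = v (n + 1) * y ((n : ℤ) - 1) / u n := by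
    intro n
    have hv1 : v (n + 1) = x n * y ((n : ℤ) + 1) := by
      rw [hve]
      have e : ((n+1 : ℕ) : ℤ) - 1 = (n : ℤ) := by push_cast; ring
      have e2 : ((n+1 : ℕ) : ℤ) = (n : ℤ) + 1 := by push_cast; ring
      rw [e, e2]
    rw [hv1, eq_div_iff (hune n), hue]
    ring
  have hxm : x (-1) ≠ 0 := hx (-1) (by norm_num)
  have hym : y (-1) ≠ 0 := hy (-1) (by norm_num)
  have H : ∀ n : ℕ, y (2 * (n : ℤ) - 1)
      = y (-1) * ((x (-1) * y 0) / (x 0 * y (-1))) ^ n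
        * ∏ s ∈ Finset.range n, A (2 * s) / C (2 * s + 1) := by
    intro n
    induction n with
    | zero => norm_num
    | succ n ih =>
      have e2 : (2 * (((n : ℕ) + 1 : ℕ) : ℤ) - 1) = ((2 * n : ℕ) : ℤ) + 1 := by
        push_cast; ring
      rw [e2, hkey (2 * n)]
      have e3 : ((2 * n : ℕ) : ℤ) - 1 = 2 * (n : ℤ) - 1 := by push_cast; ring
      rw [e3, ih]
      have hv' : v (2 * n + 1) = v 0 / C (2 * n + 1) := by
        rw [eq_div_iff (hCne _)]; exact hvC _
      have hu' : u (2 * n) = u 0 / A (2 * n) := by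
        rw [eq_div_iff (hAne _)]; exact huA _
      rw [hv', hu', Finset.prod_range_succ, pow_succ, hu0, hv0]
      have hx0 : x 0 ≠ 0 := hx' 0
      have hA2 : A (2 * n) ≠ 0 := hAne _
      have hC2 : C (2 * n + 1) ≠ 0 := hCne _
      generalize (∏ s ∈ Finset.range n, A (2 * s) / C (2 * s + 1)) = P
      generalize ((x (-1) * y 0) / (x 0 * y (-1))) ^ n = Q
      field_simp
  intro n
  rw [H n]
  have hzp : y (-1) ^ (1 - (n : ℤ)) = y (-1) / y (-1) ^ n := by
    rw [zpow_sub₀ hym, zpow_one, zpow_natCast]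
  rw [hzp]
  have hprod : (∏ s ∈ Finset.range n, A (2 * s) / C (2 * s + 1))
      = ∏ s ∈ Finset.range n,
        ((∏ k ∈ Finset.range (2 * s), a k) +
            x 0 * y (-1) * ∑ l ∈ Finset.range (2 * s), b l * ∏ k ∈ Finset.Ico (l + 1) (2 * s), a k) /
        ((∏ k ∈ Finset.range (2 * s + 1), c k) +
            x (-1) * y 0 * ∑ l ∈ Finset.range (2 * s + 1), d l * ∏ k ∈ Finset.Ico (l + 1) (2 * s + 1), c k) := by
    refine Finset.prod_congr rfl fun s _ => ?_
    rw [hAe, hCe, hu0, hv0]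
  rw [← hprod]
  have hx0 : x 0 ≠ 0 := hx' 0
  generalize (∏ s ∈ Finset.range n, A (2 * s) / C (2 * s + 1)) = P
  rw [div_pow, div_pow, mul_pow, mul_pow]
  field_simp
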